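/- With notation as in the node-centered equivalence, if the charge density on the fine grid is ρ̃(x̃_j) = (Q/(N·h_f))·∑_{p=1}^N W_f(x̃_j - x_p) and the coarse-grid density is obtained by restriction ϱ(x_k) = (h_f/h_c)·∑_j ρ̃(x̃_j)·W_c(x_k - x̃_j), then ϱ(x_k) = (Q/(N·h_c))·∑_{p=1}^N W_c(x_k - x_p). -/

import Mathlib

private lemma key_hat (m : ℕ) (hm : 0 < m) (s : ℤ) (t : ℝ) (ht0 : 0 ≤ t) (ht1 : t ≤ 1) :
    max 0 (1 - |(s : ℝ) - t| / m) =
      (1 - t) * max 0 (1 - |(s : ℝ)| / m) + t * max 0 (1 - |((s : ℝ) - 1)| / m) := by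
  have hM0 : (0 : ℝ) < m := by exact_mod_cast hm
  have hM1 : (1 : ℝ) ≤ m := by exact_mod_cast hm
  rcases le_or_gt s (-(m : ℤ)) with h1 | h1
  · have h1' : (s : ℝ) ≤ -(m : ℝ) := by exact_mod_cast h1
    rw [max_eq_left, max_eq_left, max_eq_left] <;>
      [ring; skip; skip; skip] <;>
      rw [sub_nonpos, le_div_iff₀ hM0, one_mul]
    · rw [abs_of_nonpos (by linarith)]; linarith
    · rw [abs_of_nonpos (by linarith)]; linarith
    · rw [abs_of_nonpos (by linarith)]; linarith
  · rcases le_or_gt s 0 with h2 | h2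
    · -- 1 - m ≤ s ≤ 0 : linear region, F(u) = 1 + u/m
      have h1' : -(m : ℝ) + 1 ≤ (s : ℝ) := by
        have : -(m : ℤ) + 1 ≤ s := by omega
        exact_mod_cast this
      have h2' : (s : ℝ) ≤ 0 := by exact_mod_cast h2
      rw [abs_of_nonpos (by linarith), abs_of_nonpos (by linarith),
        abs_of_nonpos (by linarith),
        max_eq_right (by rw [sub_nonneg, div_le_one hM0]; linarith),
        max_eq_right (by rw [sub_nonneg, div_le_one hM0]; linarith),
        max_eq_right (by rw [sub_nonneg, div_le_one hM0]; linarith)]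
      field_simp
      ring
    · rcases le_or_gt s m with h3 | h3
      · -- 1 ≤ s ≤ m : linear region, F(u) = 1 - u/m
        have h2' : (1 : ℝ) ≤ (s : ℝ) := by exact_mod_cast h2
        have h3' : (s : ℝ) ≤ (m : ℝ) := by exact_mod_cast h3
        rw [abs_of_nonneg (by linarith), abs_of_nonneg (by linarith),
          abs_of_nonneg (by linarith),
          max_eq_right (by rw [sub_nonneg, div_le_one hM0]; linarith),
          max_eq_right (by rw [sub_nonneg, div_le_one hM0]; linarith),
          max_eq_right (by rw [sub_nonneg, div_le_one hM0]; linarith)]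
        field_simp
        ring
      · have h3' : (m : ℝ) + 1 ≤ (s : ℝ) := by exact_mod_cast h3
        rw [max_eq_left, max_eq_left, max_eq_left] <;>
          [ring; skip; skip; skip] <;>
          rw [sub_nonpos, le_div_iff₀ hM0, one_mul]
        · rw [abs_of_nonneg (by linarith)]; linarith
        · rw [abs_of_nonneg (by linarith)]; linarith
        · rw [abs_of_nonneg (by linarith)]; linarith

private lemma interp_hat (hf : ℝ) (hhf : 0 < hf)
    (m : ℕ) (hm : 0 < m) (hc : ℝ) (hhc : hc = (m : ℝ) * hf)
    (Wf Wc : ℝ → ℝ)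
    (hWf : ∀ ζ, Wf ζ = max 0 (1 - |ζ| / hf))
    (hWc : ∀ ζ, Wc ζ = max 0 (1 - |ζ| / hc))
    (k : ℤ) (y : ℝ) :
    ∑' j : ℤ, Wf ((j : ℝ) * hf - y) * Wc ((k : ℝ) * hc - (j : ℝ) * hf)
      = Wc ((k : ℝ) * hc - y) := by
  have hM0 : (0 : ℝ) < m := by exact_mod_cast hm
  set n : ℤ := ⌊y / hf⌋ with hn
  have hx1 : (n : ℝ) * hf ≤ y := by
    rw [← le_div_iff₀ hhf]
    exact Int.floor_le _
  have hx2 : y < ((n : ℝ) + 1) * hf := by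
    rw [← div_lt_iff₀ hhf]
    exact_mod_cast Int.lt_floor_add_one (y / hf)
  -- support lemma
  have hsupp : ∀ j : ℤ, j ∉ ({n, n + 1} : Finset ℤ) →
      Wf ((j : ℝ) * hf - y) * Wc ((k : ℝ) * hc - (j : ℝ) * hf) = 0 := by
    intro j hj
    simp only [Finset.mem_insert, Finset.mem_singleton] at hj
    push_neg at hj
    have hWf0 : Wf ((j : ℝ) * hf - y) = 0 := by
      rw [hWf]
      apply max_eq_left
      rw [sub_nonpos, le_div_iff₀ hhf, one_mul]
      rcases lt_or_gt_of_ne hj.1 with h | h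
      · have h' : (j : ℝ) + 1 ≤ (n : ℝ) := by
          have : j + 1 ≤ n := by omega
          exact_mod_cast this
        rw [abs_of_nonpos (by nlinarith)]
        nlinarith
      · have h' : (n : ℝ) + 2 ≤ (j : ℝ) := by
          have : n + 2 ≤ j := by omega
          exact_mod_cast this
        rw [abs_of_nonneg (by nlinarith)]
        nlinarith
    rw [hWf0, zero_mul]
  rw [tsum_eq_sum hsupp, Finset.sum_insert (by simp), Finset.sum_singleton]
  set t : ℝ := y / hf - n with ht
  have ht0 : 0 ≤ t := by
    rw [ht, sub_nonneg, le_div_iff₀ hhf]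
    linarith
  have ht1 : t ≤ 1 := by
    rw [ht, sub_le_iff_le_add, div_le_iff₀ hhf]
    linarith [hx2]
  have hy : y = ((n : ℝ) + t) * hf := by
    rw [ht]; field_simp; ring
  have hWfn : Wf ((n : ℝ) * hf - y) = 1 - t := by
    rw [hWf, hy]
    have : |(n : ℝ) * hf - ((n : ℝ) + t) * hf| = t * hf := by
      rw [abs_of_nonpos (by nlinarith)]; ring
    rw [this, mul_div_assoc, div_self hhf.ne', mul_one]
    exact max_eq_right (by linarith)
  have hWfn1 : Wf (((n : ℤ) + 1 : ℤ) * hf - y) = t := by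
    push_cast
    rw [hWf, hy]
    have : |((n : ℝ) + 1) * hf - ((n : ℝ) + t) * hf| = (1 - t) * hf := by
      rw [abs_of_nonneg (by nlinarith)]; ring
    rw [this, mul_div_assoc, div_self hhf.ne', mul_one]
    have : (1 : ℝ) - (1 - t) = t := by ring
    rw [this]
    exact max_eq_right ht0
  -- rewrite Wc terms in terms of key_hat
  have habs : ∀ a : ℝ, |a * hf| / hc = |a| / m := by
    intro a
    rw [hhc, abs_mul, abs_of_pos hhf, mul_comm (m : ℝ) hf, ← div_div,
      mul_div_assoc, div_self hhf.ne', mul_one]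
  have hWcgen : ∀ a : ℝ, Wc (a * hf) = max 0 (1 - |a| / m) := by
    intro a
    rw [hWc, habs]
  set s : ℤ := k * m - n with hs
  have e1 : (k : ℝ) * hc - (n : ℝ) * hf = (s : ℝ) * hf := by
    rw [hhc, hs]; push_cast; ring
  have e2 : (k : ℝ) * hc - ((n : ℤ) + 1 : ℤ) * hf = ((s : ℝ) - 1) * hf := by
    rw [hhc, hs]; push_cast; ring
  have e3 : (k : ℝ) * hc - y = ((s : ℝ) - t) * hf := by
    rw [hhc, hs, hy]; push_cast; ring
  rw [hWfn, hWfn1, e1, e2, e3, hWcgen, hWcgen, hWcgen]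
  have hk := key_hat m hm s t ht0 ht1
  linarith [hk]

theorem two_step_deposition_density (hf : ℝ) (hhf : 0 < hf)
    (m : ℕ) (hm : 0 < m) (hc : ℝ) (hhc : hc = (m : ℝ) * hf)
    (Wf Wc : ℝ → ℝ)
    (hWf : ∀ ζ, Wf ζ = max 0 (1 - |ζ| / hf))
    (hWc : ∀ ζ, Wc ζ = max 0 (1 - |ζ| / hc))
    (N : ℕ) (hN : 0 < N) (Q : ℝ) (x : Fin N → ℝ)
    (ρtil : ℤ → ℝ)
    (hρtil : ∀ j : ℤ, ρtil j = Q / (N * hf) * ∑ p, Wf ((j : ℝ) * hf - x p))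
    (k : ℤ) :
    (hf / hc) * ∑' j : ℤ, ρtil j * Wc ((k : ℝ) * hc - (j : ℝ) * hf)
      = Q / (N * hc) * ∑ p, Wc ((k : ℝ) * hc - x p) := by
  have hc0 : 0 < hc := by rw [hhc]; positivity
  have hN0 : (0 : ℝ) < N := by exact_mod_cast hN
  -- rewrite summand
  have hpt : ∀ j : ℤ, ρtil j * Wc ((k : ℝ) * hc - (j : ℝ) * hf)
      = ∑ p, Q / (N * hf) * (Wf ((j : ℝ) * hf - x p) * Wc ((k : ℝ) * hc - (j : ℝ) * hf)) := by
    intro j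
    rw [hρtil j, Finset.mul_sum, Finset.sum_mul]
    congr 1
    ext p
    ring
  -- summability of each per-particle function
  have hsummable : ∀ p : Fin N, Summable (fun j : ℤ =>
      Q / (N * hf) * (Wf ((j : ℝ) * hf - x p) * Wc ((k : ℝ) * hc - (j : ℝ) * hf))) := by
    intro p
    set n : ℤ := ⌊x p / hf⌋ with hn
    apply summable_of_ne_finset_zero (s := {n, n + 1})
    intro j hj
    simp only [Finset.mem_insert, Finset.mem_singleton] at hj
    push_neg at hj
    have hx1 : (n : ℝ) * hf ≤ x p := by
      rw [← le_div_iff₀ hhf]; exact Int.floor_le _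
    have hx2 : x p < ((n : ℝ) + 1) * hf := by
      rw [← div_lt_iff₀ hhf]
      exact_mod_cast Int.lt_floor_add_one (x p / hf)
    have hWf0 : Wf ((j : ℝ) * hf - x p) = 0 := by
      rw [hWf]
      apply max_eq_left
      rw [sub_nonpos, le_div_iff₀ hhf, one_mul]
      rcases lt_or_gt_of_ne hj.1 with h | h
      · have h' : (j : ℝ) + 1 ≤ (n : ℝ) := by
          have : j + 1 ≤ n := by omega
          exact_mod_cast this
        rw [abs_of_nonpos (by nlinarith)]
        nlinarith
      · have h' : (n : ℝ) + 2 ≤ (j : ℝ) := by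
          have : n + 2 ≤ j := by omega
          exact_mod_cast this
        rw [abs_of_nonneg (by nlinarith)]
        nlinarith
    rw [hWf0, zero_mul, mul_zero]
  calc (hf / hc) * ∑' j : ℤ, ρtil j * Wc ((k : ℝ) * hc - (j : ℝ) * hf)
      = (hf / hc) * ∑' j : ℤ, ∑ p, Q / (N * hf) *
          (Wf ((j : ℝ) * hf - x p) * Wc ((k : ℝ) * hc - (j : ℝ) * hf)) := by
        rw [tsum_congr hpt]
    _ = (hf / hc) * ∑ p, ∑' j : ℤ, Q / (N * hf) *
          (Wf ((j : ℝ) * hf - x p) * Wc ((k : ℝ) * hc - (j : ℝ) * hf)) := by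
        rw [Summable.tsum_finsetSum (fun p _ => hsummable p)]
    _ = (hf / hc) * ∑ p, Q / (N * hf) * Wc ((k : ℝ) * hc - x p) := by
        congr 1
        apply Finset.sum_congr rfl
        intro p _
        rw [tsum_mul_left, interp_hat hf hhf m hm hc hhc Wf Wc hWf hWc k (x p)]
    _ = Q / (N * hc) * ∑ p, Wc ((k : ℝ) * hc - x p) := by
        rw [Finset.mul_sum, Finset.mul_sum]
        apply Finset.sum_congr rfl
        intro p _
        field_simp
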